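/- Under the setup of the UAV-positioning objective, with g > 1, K ≥ 0, d > 0, if the scalar condition (2g − 2 − ln g)(2 + K d)² − 2 g ln g > 0 holds, then the quantity Q = g ln g (2 + K d) d² + r²·[(2g − 2 − ln g)(2 + K d)² − g ln g (2 + K d) − 2 g ln g] is strictly positive for every r with 0 ≤ r² ≤ d². -/
import Mathlib

/-- Positivity of the first principal minor quantity Q in Lemma 1. -/
theorem Q_pos (g K d : ℝ) (hg : 1 < g) (hK : 0 ≤ K) (hd : 0 < d)
    (hcond : 0 < (2 * g - 2 - Real.log g) * (2 + K * d) ^ 2 - 2 * g * Real.log g)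
    (r : ℝ) (hr : r ^ 2 ≤ d ^ 2) :
    0 < g * Real.log g * (2 + K * d) * d ^ 2 +
        r ^ 2 * ((2 * g - 2 - Real.log g) * (2 + K * d) ^ 2 -
          g * Real.log g * (2 + K * d) - 2 * g * Real.log g) := by
  have hlog : 0 < Real.log g := Real.log_pos hg
  have hg0 : 0 < g := by linarith
  have hKd : 0 < 2 + K * d := by nlinarith
  have hr0 : 0 ≤ r ^ 2 := sq_nonneg r
  set B := (2 * g - 2 - Real.log g) * (2 + K * d) ^ 2 -
      g * Real.log g * (2 + K * d) - 2 * g * Real.log g with hB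
  rcases le_or_gt 0 B with h | h
  · have : 0 < g * Real.log g * (2 + K * d) * d ^ 2 := by positivity
    nlinarith [mul_nonneg hr0 h]
  · have h1 : d ^ 2 * B ≤ r ^ 2 * B := by
      exact mul_le_mul_of_nonpos_right hr h.le
    nlinarith [mul_pos (pow_pos hd 2) hcond, hB]
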